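/- Let N be a natural number with N > 1 and let u be a unit of the ring ZMod (N²) whose underlying element is 1 + N. Then the multiplicative order of u in the unit group (ZMod (N²))ˣ equals N. -/
import Mathlib

lemma defe_pow {R : Type*} [CommRing R] (a : R) (ha : a * a = 0) (k : ℕ) :
    (1 + a) ^ k = 1 + (k : R) * a := by
  induction k with
  | zero => simp
  | succ k ih =>
    rw [pow_succ, ih]
    push_cast
    linear_combination (k : R) * ha

lemma defe_NN_zero (N : ℕ) : ((N : ZMod (N ^ 2)) * N) = 0 := by
  have : ((N ^ 2 : ℕ) : ZMod (N ^ 2)) = 0 := ZMod.natCast_self _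
  simpa [pow_two, Nat.cast_mul] using this

/-- For `N > 1`, the unit of `ZMod (N²)` whose underlying element is `1 + N`
has multiplicative order exactly `N` in `(ZMod (N²))ˣ`. -/
theorem defe_base_orderOf (N : ℕ) (hN : 1 < N) (u : (ZMod (N ^ 2))ˣ)
    (hu : (u : ZMod (N ^ 2)) = 1 + (N : ZMod (N ^ 2))) :
    orderOf u = N := by
  have hN0 : 0 < N := Nat.lt_of_lt_of_le Nat.one_pos hN.le
  have hz := defe_NN_zero N
  have huN : u ^ N = 1 := by
    ext
    push_cast [hu, defe_pow _ hz]
    simpa using hz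
  have hdvd : orderOf u ∣ N := orderOf_dvd_of_pow_eq_one huN
  have hord : u ^ orderOf u = 1 := pow_orderOf_eq_one u
  have h1 : (1 : ZMod (N ^ 2)) + (orderOf u : ZMod (N ^ 2)) * N = 1 := by
    have := congrArg (Units.val) hord
    push_cast [hu, defe_pow _ hz] at this
    simpa using this
  have h0 : ((orderOf u * N : ℕ) : ZMod (N ^ 2)) = 0 := by
    push_cast
    linear_combination h1
  have hdvd2 : N ^ 2 ∣ orderOf u * N := (ZMod.natCast_eq_zero_iff _ _).mp h0
  have hNd : N ∣ orderOf u := by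
    obtain ⟨k, hk⟩ := hdvd2
    refine ⟨k, ?_⟩
    have : orderOf u * N = (N * k) * N := by rw [hk]; ring
    exact Nat.eq_of_mul_eq_mul_right hN0 this
  exact Nat.dvd_antisymm hdvd hNd
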